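/- arXiv:1703.10641 — 2 statements merged into one kernel-verified Lean document; each statement's English description precedes it below -/
import Mathlib

section
/- Let R be an integral domain of characteristic 0. The R-algebra homomorphism D_F → End_R(S) sending an element z of the formal affine Demazure algebra to its action on S (so X_i acts as the Demazure operator Δ_i) is injective. -/
open scoped Classical
noncomputable section

/-- Truncation (up to degree `N` in each variable) of the double power series
`F(a,b) = Σ_{i,j} c i j • a^i b^j` of a coefficient family `c`, substituted at two
polynomials `a b` in three variables. -/
noncomputable def fglTrunc {R : Type} [CommRing R] (c : ℕ → ℕ → R) (N : ℕ)
    (a b : MvPolynomial (Fin 3) R) : MvPolynomial (Fin 3) R :=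
  ∑ p ∈ Finset.range N ×ˢ Finset.range N, MvPolynomial.C (c p.1 p.2) * a ^ p.1 * b ^ p.2

/-- A one-dimensional commutative formal group law `F(x,y) = Σ_{i,j} c i j x^i y^j`
over `R`, recorded by its coefficients.  Associativity is expressed through
arbitrarily high truncations. -/
structure FormalGroupLaw (R : Type) [CommRing R] where
  c : ℕ → ℕ → R
  c_comm : ∀ i j, c i j = c j i
  c_norm : c 1 0 = 1
  c_zero : ∀ i, i ≠ 1 → c i 0 = 0
  c_assoc : ∀ (N : ℕ) (d : Fin 3 →₀ ℕ), d 0 + d 1 + d 2 < N →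
    MvPolynomial.coeff d
      (fglTrunc c N (fglTrunc c N (MvPolynomial.X 0) (MvPolynomial.X 1)) (MvPolynomial.X 2)) =
    MvPolynomial.coeff d
      (fglTrunc c N (MvPolynomial.X 0) (fglTrunc c N (MvPolynomial.X 1) (MvPolynomial.X 2)))

/-- The whole setting of the paper: a generalized Cartan matrix together with its
root datum and Weyl group `W`, a Demazure lattice `Λ`, a one-dimensional commutative
formal group law `F` over `R`, the formal group algebra `S = R[[Λ]]_F` (presented by
its defining relations together with an `R`-algebra isomorphism with a multivariate
power series ring), the localization `Q` of `S` at the classes `x_α` of all positive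
roots, the twisted group algebra `Q_W = Q ⋊ R[W]` and its action on `Q`. -/
structure DemazureSetup (R : Type) [CommRing R] : Type 1 where
  /-- size of the generalized Cartan matrix -/
  n : ℕ
  /-- the Demazure lattice `Λ` -/
  Λ : Type
  [Λadd : AddCommGroup Λ]
  [Λfree : Module.Free ℤ Λ]
  [Λfin : Module.Finite ℤ Λ]
  /-- the Weyl group -/
  W : Type
  [Wgrp : Group W]
  [Wact : DistribMulAction W Λ]
  /-- the simple reflections -/
  s : Fin n → W
  s_sq : ∀ i, s i * s i = 1
  s_gen : Subgroup.closure (Set.range s) = ⊤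
  /-- the simple roots, viewed inside the Demazure lattice -/
  sroot : Fin n → Λ
  roots_indep : LinearIndependent ℤ sroot
  /-- pairing with the simple coroots: `scoroot i λ = ⟨λ, α_i^∨⟩ ∈ ℤ` -/
  scoroot : Fin n → (Λ →+ ℤ)
  /-- diagonal entries of the generalized Cartan matrix `a_{ii} = ⟨α_i, α_i^∨⟩ = 2` -/
  cartan_diag : ∀ i, scoroot i (sroot i) = 2
  /-- off-diagonal entries `a_{ij} = ⟨α_j, α_i^∨⟩` are nonpositive -/
  cartan_off : ∀ i j, i ≠ j → scoroot i (sroot j) ≤ 0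
  cartan_zero : ∀ i j, scoroot i (sroot j) = 0 ↔ scoroot j (sroot i) = 0
  /-- the simple reflections act by `s_i(λ) = λ - ⟨λ, α_i^∨⟩ α_i` -/
  s_act : ∀ (i : Fin n) (lam : Λ), s i • lam = lam - scoroot i lam • sroot i
  /-- `W` acts faithfully on `Λ` -/
  act_faithful : ∀ w : W, (∀ lam : Λ, w • lam = lam) → w = 1
  /-- every simple root can be extended to a `ℤ`-basis of `Λ` (Demazure lattice) -/
  basis_ext : ∀ i, ∃ (b : Module.Basis (Fin (Module.finrank ℤ Λ)) ℤ Λ) (j : Fin (Module.finrank ℤ Λ)),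
    b j = sroot i
  /-- the formal group law `F` -/
  fgl : FormalGroupLaw R
  /-- the formal group algebra `S = R[[Λ]]_F` -/
  S : Type
  [Scr : CommRing S]
  [Salg : Algebra R S]
  /-- the generators `x_λ`, `λ ∈ Λ`, of the formal group algebra -/
  x : Λ → S
  x_zero : x 0 = 0
  /-- the augmentation map `ε : S → R`, `x_λ ↦ 0` -/
  aug : S →ₐ[R] R
  aug_x : ∀ lam, aug (x lam) = 0
  /-- the defining relation `x_{λ+μ} = F(x_λ, x_μ)`, modulo every power of the
  augmentation ideal -/
  x_add : ∀ (lam mu : Λ) (N : ℕ),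
    x (lam + mu) - ∑ p ∈ Finset.range N ×ˢ Finset.range N,
      algebraMap R S (fgl.c p.1 p.2) * x lam ^ p.1 * x mu ^ p.2
    ∈ RingHom.ker aug.toRingHom ^ N
  /-- a `ℤ`-basis of `Λ` -/
  e : Module.Basis (Fin (Module.finrank ℤ Λ)) ℤ Λ
  /-- `S` is the power series ring on the `x`-classes of a basis of `Λ` -/
  ψ : S ≃ₐ[R] MvPowerSeries (Fin (Module.finrank ℤ Λ)) R
  ψ_x : ∀ j, ψ (x (e j)) = MvPowerSeries.X j
  aug_ψ : ∀ a : S, aug a = MvPowerSeries.constantCoeff (σ := Fin (Module.finrank ℤ Λ)) (R := R) (ψ a)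
  /-- the `W`-action on `S` induced by `w(x_λ) = x_{w(λ)}` -/
  [SWact : MulSemiringAction W S]
  smul_x : ∀ (w : W) (lam : Λ), w • x lam = x (w • lam)
  smul_algebraMap : ∀ (w : W) (r : R), w • (algebraMap R S r) = algebraMap R S r
  smul_IF : ∀ (w : W) (N : ℕ) (a : S),
    a ∈ RingHom.ker aug.toRingHom ^ N → w • a ∈ RingHom.ker aug.toRingHom ^ N
  /-- the localization `Q = S[1/x_α : α ∈ Φ₊]` -/
  Q : Type
  [Qcr : CommRing Q]
  [Qalg : Algebra S Q]
  loc : IsLocalization (Submonoid.closure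
    (x '' {v | (∃ (w : W) (i : Fin n), v = w • sroot i) ∧
               v ∈ (AddSubmonoid.closure (Set.range sroot) : AddSubmonoid Λ)})) Q
  /-- the induced `W`-action on `Q` -/
  [QWact : MulSemiringAction W Q]
  smul_SQ : ∀ (w : W) (a : S), w • (algebraMap S Q a) = algebraMap S Q (w • a)
  /-- the twisted group algebra `Q_W = Q ⋊_R R[W]` -/
  QW : Type
  [QWring : Ring QW]
  [QWalg : Algebra R QW]
  /-- the canonical inclusion `Q → Q_W`, `q ↦ q δ_e` -/
  ι : Q →+* QW
  /-- the canonical basis elements `δ_w` of `Q_W` -/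
  δ : W →* QW
  ι_alg : ∀ r : R, ι (algebraMap S Q (algebraMap R S r)) = algebraMap R QW r
  /-- the twisted commutation rule `δ_w · q = w(q) · δ_w` -/
  twist : ∀ (w : W) (q : Q), δ w * ι q = ι (w • q) * δ w
  /-- `Q_W` is a free left `Q`-module with basis `{δ_w}_{w ∈ W}` -/
  qw_free : ∀ z : QW, ∃! c : W →₀ Q, z = c.sum fun w q => ι q * δ w
  /-- the action of `Q_W` on `Q`, `(q δ_w) · q' = q · w(q')` -/
  act : QW → Q → Q
  act_addl : ∀ (z z' : QW) (q : Q), act (z + z') q = act z q + act z' q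
  act_spec : ∀ (q : Q) (w : W) (q' : Q), act (ι q * δ w) q' = q * (w • q')

namespace DemazureSetup

attribute [instance] Λadd Λfree Λfin Wgrp Wact Scr Salg SWact Qcr Qalg QWact QWring QWalg

variable {R : Type} [CommRing R] (D : DemazureSetup R)

/-- the set `Φ` of (real) roots -/
def roots : Set D.Λ := {v | ∃ (w : D.W) (i : Fin D.n), v = w • D.sroot i}

/-- the set `Φ₊` of positive roots -/
def posRoots : Set D.Λ :=
  {v | (∃ (w : D.W) (i : Fin D.n), v = w • D.sroot i) ∧
       v ∈ (AddSubmonoid.closure (Set.range D.sroot) : AddSubmonoid D.Λ)}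

/-- the set `Φ₋ = -Φ₊` of negative roots -/
def negRoots : Set D.Λ := {v | -v ∈ D.posRoots}

/-- the reflection `s_α ∈ W` associated to a real root `α` -/
def refl (v : D.Λ) : D.W :=
  if h : v ∈ D.roots then h.choose * D.s h.choose_spec.choose * h.choose⁻¹ else 1

/-- the product `s_{i_1} ⋯ s_{i_l}` of a word in the simple reflections -/
def wordProd (ω : List (Fin D.n)) : D.W := (ω.map D.s).prod

/-- the Coxeter length function on `W` -/
def len (w : D.W) : ℕ := sInf {l | ∃ ω : List (Fin D.n), ω.length = l ∧ D.wordProd ω = w}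

/-- `ω` is a reduced word for `w` -/
def IsReduced (w : D.W) (ω : List (Fin D.n)) : Prop :=
  D.wordProd ω = w ∧ ω.length = D.len w

/-- a choice of a reduced word `I_w` for every `w ∈ W` -/
def IsRedSystem (I : D.W → List (Fin D.n)) : Prop := ∀ w, D.IsReduced w (I w)

/-- the Bruhat order on `W` (subword characterization) -/
def bruhatLE (u w : D.W) : Prop :=
  ∃ ω ω' : List (Fin D.n), D.IsReduced w ω ∧ ω'.Sublist ω ∧ D.wordProd ω' = u

def bruhatLT (u w : D.W) : Prop := D.bruhatLE u w ∧ u ≠ w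

/-- the inversion set `Φ_w = {α ∈ Φ₊ : w⁻¹(α) ∈ Φ₋}` -/
def invSet (w : D.W) : Set D.Λ := {v | v ∈ D.posRoots ∧ w⁻¹ • v ∈ D.negRoots}

/-- the augmentation ideal `I_F = ker ε ⊂ S` -/
def IF : Ideal D.S := RingHom.ker D.aug.toRingHom

/-- the element `c_v = Π_{α ∈ Φ_v} x_α ∈ S` -/
def cElt (v : D.W) : D.S := ∏ᶠ a ∈ D.invSet v, D.x a

/-- the image of `x_λ` in the localization `Q` -/
def xQ (v : D.Λ) : D.Q := algebraMap D.S D.Q (D.x v)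

/-- the image of `a ∈ S` in the twisted group algebra `Q_W` -/
def SQW (a : D.S) : D.QW := D.ι (algebraMap D.S D.Q a)

/-- the formal Demazure element `X_α = (1/x_α)(1 - δ_{s_α}) ∈ Q_W` -/
def Xel (v : D.Λ) : D.QW := D.ι (Ring.inverse (D.xQ v)) * (1 - D.δ (D.refl v))

/-- the formal push-pull element `Y_α = 1/x_{-α} + (1/x_α) δ_{s_α} ∈ Q_W` -/
def Yel (v : D.Λ) : D.QW := D.ι (Ring.inverse (D.xQ (-v))) + D.ι (Ring.inverse (D.xQ v)) * D.δ (D.refl v)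

/-- `X_i = X_{α_i}` -/
def Xi (i : Fin D.n) : D.QW := D.Xel (D.sroot i)

/-- `Y_i = Y_{α_i}` -/
def Yi (i : Fin D.n) : D.QW := D.Yel (D.sroot i)

/-- `X_I = X_{i_1} ⋯ X_{i_l}` for a word `I = (i_1, …, i_l)` -/
def Xword (ω : List (Fin D.n)) : D.QW := (ω.map D.Xi).prod

/-- `Y_I = Y_{i_1} ⋯ Y_{i_l}` for a word `I = (i_1, …, i_l)` -/
def Yword (ω : List (Fin D.n)) : D.QW := (ω.map D.Yi).prod

/-- the formal affine Demazure algebra `D_F`: the `R`-subalgebra of `Q_W` generated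
by `S` and the elements `X_α`, `α ∈ Φ` -/
def DF : Subalgebra R D.QW :=
  Algebra.adjoin R (Set.range D.SQW ∪ D.Xel '' D.roots)

/-- `z · S ⊆ S` for `z ∈ Q_W` -/
def PreservesS (z : D.QW) : Prop :=
  ∀ a : D.S, ∃ b : D.S, D.act z (algebraMap D.S D.Q a) = algebraMap D.S D.Q b

end DemazureSetup

end
namespace DemazureSetup

variable {R : Type} [CommRing R] (D : DemazureSetup R)

/-- coefficient of `ψ a` at the monomial `X j` -/
noncomputable def coef1 (j : Fin (Module.finrank ℤ D.Λ)) (a : D.S) : R :=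
  MvPowerSeries.coeff (Finsupp.single j 1) (D.ψ a)

lemma mem_IF_iff {a : D.S} : a ∈ D.IF ↔ D.aug a = 0 := Iff.rfl

lemma coef1_mul_eq_zero (j : Fin (Module.finrank ℤ D.Λ)) {a b : D.S}
    (ha : a ∈ D.IF) (hb : b ∈ D.IF) : D.coef1 j (a * b) = 0 := by
  classical
  have hca : MvPowerSeries.constantCoeff (D.ψ a) = 0 := by
    rw [← D.aug_ψ]; exact ha
  have hcb : MvPowerSeries.constantCoeff (D.ψ b) = 0 := by
    rw [← D.aug_ψ]; exact hb
  unfold coef1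
  rw [map_mul, MvPowerSeries.coeff_mul]
  apply Finset.sum_eq_zero
  rintro ⟨d, e⟩ hde
  rw [Finset.HasAntidiagonal.mem_antidiagonal] at hde
  have hone : d j + e j = 1 := by
    have := congrArg (fun f => f j) hde
    simpa using this
  have hzero : ∀ s, s ≠ j → d s = 0 ∧ e s = 0 := by
    intro s hs
    have := congrArg (fun f => f s) hde
    simp only [Finsupp.add_apply, Finsupp.single_apply, if_neg (Ne.symm hs)] at this
    omega
  rcases Nat.add_eq_one_iff.mp hone with ⟨hd, _⟩ | ⟨_, he⟩
  · have : d = 0 := by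
      ext s
      by_cases hs : s = j
      · simpa [hs] using hd
      · exact (hzero s hs).1
    rw [this]
    simp [MvPowerSeries.coeff_zero_eq_constantCoeff, hca]
  · have : e = 0 := by
      ext s
      by_cases hs : s = j
      · simpa [hs] using he
      · exact (hzero s hs).2
    rw [this]
    simp [MvPowerSeries.coeff_zero_eq_constantCoeff, hcb]

lemma coef1_IF_sq (j : Fin (Module.finrank ℤ D.Λ)) {a : D.S}
    (ha : a ∈ D.IF ^ 2) : D.coef1 j a = 0 := by
  rw [pow_two] at ha
  refine Submodule.mul_induction_on ha (fun x hx y hy => D.coef1_mul_eq_zero j hx hy) ?_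
  intro x y hx hy
  have : D.coef1 j (x + y) = D.coef1 j x + D.coef1 j y := by
    unfold coef1; rw [map_add, map_add]
  rw [this, hx, hy, add_zero]

lemma x_mem_IF (lam : D.Λ) : D.x lam ∈ D.IF := by
  rw [mem_IF_iff]; exact D.aug_x lam

lemma coef1_x_add (j : Fin (Module.finrank ℤ D.Λ)) (lam mu : D.Λ) :
    D.coef1 j (D.x (lam + mu)) = D.coef1 j (D.x lam) + D.coef1 j (D.x mu) := by
  have h := D.x_add lam mu 2
  set T : D.S := ∑ p ∈ Finset.range 2 ×ˢ Finset.range 2,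
      algebraMap R D.S (D.fgl.c p.1 p.2) * D.x lam ^ p.1 * D.x mu ^ p.2 with hT
  have hTval : T = D.x lam + D.x mu +
      algebraMap R D.S (D.fgl.c 1 1) * D.x lam * D.x mu := by
    rw [hT, Finset.sum_product]
    simp only [Finset.sum_range_succ, Finset.sum_range_zero, pow_zero, pow_one, mul_one]
    rw [D.fgl.c_zero 0 (by norm_num), show D.fgl.c 0 1 = 1 from (D.fgl.c_comm 0 1).trans D.fgl.c_norm,
      D.fgl.c_norm]
    simp only [map_zero, map_one, zero_mul, one_mul, zero_add]
    ring
  have hadd : D.coef1 j (D.x (lam + mu)) = D.coef1 j (D.x (lam + mu) - T) + D.coef1 j T := by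
    unfold coef1
    rw [← map_add, ← map_add, sub_add_cancel]
  rw [hadd, D.coef1_IF_sq j h, zero_add, hTval]
  have h1 : D.coef1 j (D.x lam + D.x mu + algebraMap R D.S (D.fgl.c 1 1) * D.x lam * D.x mu)
      = D.coef1 j (D.x lam) + D.coef1 j (D.x mu)
        + D.coef1 j (algebraMap R D.S (D.fgl.c 1 1) * D.x lam * D.x mu) := by
    unfold coef1
    rw [map_add, map_add, map_add, map_add]
  rw [h1, D.coef1_mul_eq_zero j (Ideal.mul_mem_left _ _ (D.x_mem_IF lam)) (D.x_mem_IF mu),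
    add_zero]

end DemazureSetup

namespace DemazureSetup

variable {R : Type} [CommRing R] (D : DemazureSetup R)

lemma coef1_x_basis (j i : Fin (Module.finrank ℤ D.Λ)) :
    D.coef1 j (D.x (D.e i)) = if i = j then 1 else 0 := by
  classical
  unfold coef1
  rw [D.ψ_x i, MvPowerSeries.coeff_index_single_X]
  simp [eq_comm]

/-- `λ ↦ coef1 j (x λ)` as an additive homomorphism -/
noncomputable def coef1x (j : Fin (Module.finrank ℤ D.Λ)) : D.Λ →+ R :=
  AddMonoidHom.mk' (fun lam => D.coef1 j (D.x lam)) (D.coef1_x_add j)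

lemma coef1x_repr (j : Fin (Module.finrank ℤ D.Λ)) (lam : D.Λ) :
    D.coef1x j lam = ((D.e.repr lam j : ℤ) : R) := by
  classical
  have hbasis : ∀ i, D.coef1x j (D.e i) = if i = j then 1 else 0 := D.coef1_x_basis j
  conv_lhs => rw [← D.e.sum_repr lam]
  rw [map_sum]
  have : ∀ i ∈ Finset.univ, D.coef1x j (D.e.repr lam i • D.e i)
      = if i = j then ((D.e.repr lam j : ℤ) : R) else 0 := by
    intro i _
    rw [AddMonoidHom.map_zsmul, hbasis i]
    by_cases h : i = j
    · simp [h]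
    · simp [h]
  rw [Finset.sum_congr rfl this, Finset.sum_ite_eq' Finset.univ j]
  simp

lemma x_injective [CharZero R] : Function.Injective D.x := by
  intro lam mu h
  have hrepr : D.e.repr lam = D.e.repr mu := by
    ext j
    have : D.coef1x j lam = D.coef1x j mu := by
      show D.coef1 j (D.x lam) = D.coef1 j (D.x mu)
      rw [h]
    rw [coef1x_repr, coef1x_repr] at this
    exact_mod_cast this
  exact D.e.repr.injective hrepr

lemma S_isDomain [IsDomain R] : IsDomain D.S := by
  have : IsDomain (MvPowerSeries (Fin (Module.finrank ℤ D.Λ)) R) :=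
    NoZeroDivisors.to_isDomain _
  exact MulEquiv.isDomain _ (D.ψ.toRingEquiv.toMulEquiv)

/-- the localization submonoid -/
def locM : Submonoid D.S :=
  Submonoid.closure (D.x '' {v | (∃ (w : D.W) (i : Fin D.n), v = w • D.sroot i) ∧
      v ∈ (AddSubmonoid.closure (Set.range D.sroot) : AddSubmonoid D.Λ)})

lemma locM_le [IsDomain R] [CharZero R] : D.locM ≤ nonZeroDivisors D.S := by
  have := D.S_isDomain
  rw [locM, Submonoid.closure_le]
  rintro _ ⟨v, ⟨⟨w, i, rfl⟩, -⟩, rfl⟩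
  refine mem_nonZeroDivisors_of_ne_zero ?_
  intro hx0
  have hv0 : w • D.sroot i = 0 := by
    apply D.x_injective
    rw [hx0, D.x_zero]
  have : D.sroot i = 0 := by
    have := congrArg (fun v => w⁻¹ • v) hv0
    simpa [inv_smul_smul] using this
  exact D.roots_indep.ne_zero i this

end DemazureSetup

namespace DemazureSetup

variable {R : Type} [CommRing R] (D : DemazureSetup R)

lemma act_zero (q : D.Q) : D.act 0 q = 0 := by
  have h := D.act_addl 0 0 q
  rw [add_zero] at h
  exact (left_eq_add.mp h)

lemma act_finset_sum (T : Finset D.W) (f : D.W → D.Q) (q : D.Q) :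
    D.act (∑ w ∈ T, D.ι (f w) * D.δ w) q = ∑ w ∈ T, f w * (w • q) := by
  classical
  induction T using Finset.induction with
  | empty => simpa using D.act_zero q
  | insert w T hw ih =>
    rw [Finset.sum_insert hw, Finset.sum_insert hw, D.act_addl, D.act_spec, ih]

lemma smul_algQ (w : D.W) (a : D.S) :
    w • (algebraMap D.S D.Q a) = algebraMap D.S D.Q (w • a) := D.smul_SQ w a

/-- Artin-type independence of the action of distinct group elements -/
lemma artin [IsDomain R] [CharZero R] : ∀ (T : Finset D.W) (f : D.W → D.Q),
    (∀ a : D.S, ∑ w ∈ T, f w * (w • algebraMap D.S D.Q a) = 0) →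
    ∀ w ∈ T, f w = 0 := by
  classical
  have hSdom := D.S_isDomain
  haveI hloc : IsLocalization D.locM D.Q := D.loc
  have hQdom : IsDomain D.Q := IsLocalization.isDomain_of_le_nonZeroDivisors (S := D.Q) D.locM_le
  have hinj : Function.Injective (algebraMap D.S D.Q) := IsLocalization.injective D.Q D.locM_le
  intro T
  induction T using Finset.strongInduction with
  | _ T ih =>
    intro f hf w hw
    by_cases hsing : ∀ w1 ∈ T, w1 = w
    · -- T = {w}
      have hT : T = {w} := by
        apply Finset.eq_singleton_iff_unique_mem.mpr
        exact ⟨hw, hsing⟩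
      have := hf 1
      rw [hT, Finset.sum_singleton, map_one, smul_one, mul_one] at this
      exact this
    · push_neg at hsing
      obtain ⟨w1, hw1T, hw1w⟩ := hsing
      -- separate w and w1 by an element of S
      obtain ⟨lam, hlam⟩ : ∃ lam : D.Λ, w • lam ≠ w1 • lam := by
        by_contra hcon
        push_neg at hcon
        apply hw1w
        have : w1⁻¹ * w = 1 := by
          apply D.act_faithful
          intro lam
          rw [mul_smul, hcon lam, inv_smul_smul]
        symm
        rw [← inv_mul_cancel w1] at this
        exact mul_left_cancel this
      set b : D.Q := algebraMap D.S D.Q (D.x lam) with hb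
      have hsep : w • b - w1 • b ≠ 0 := by
        rw [sub_ne_zero, hb, D.smul_algQ, D.smul_algQ]
        intro hcon
        apply hlam
        apply D.x_injective
        rw [← D.smul_x, ← D.smul_x]
        exact hinj hcon
      set g : D.W → D.Q := fun v => f v * (v • b - w1 • b) with hg
      have hgsum : ∀ a : D.S, ∑ v ∈ T.erase w1, g v * (v • algebraMap D.S D.Q a) = 0 := by
        intro a
        have hgw1 : g w1 * (w1 • algebraMap D.S D.Q a) = 0 := by
          simp [hg]
        rw [Finset.sum_erase (f := fun v => g v * (v • algebraMap D.S D.Q a)) T hgw1]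
        have expand : ∀ v ∈ T, g v * (v • algebraMap D.S D.Q a)
            = f v * (v • algebraMap D.S D.Q (D.x lam * a)) - (w1 • b) * (f v * (v • algebraMap D.S D.Q a)) := by
          intro v _
          rw [hg]
          have : v • algebraMap D.S D.Q (D.x lam * a) = (v • b) * (v • algebraMap D.S D.Q a) := by
            rw [map_mul, smul_mul', hb]
          rw [this]
          ring
        rw [Finset.sum_congr rfl expand, Finset.sum_sub_distrib, hf (D.x lam * a),
          ← Finset.mul_sum, hf a, mul_zero, sub_zero]
      have hsub : T.erase w1 ⊂ T := Finset.erase_ssubset hw1T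
      have hgz := ih (T.erase w1) hsub g hgsum w (Finset.mem_erase.mpr ⟨Ne.symm hw1w, hw⟩)
      rw [hg] at hgz
      rcases mul_eq_zero.mp hgz with h | h
      · exact h
      · exact absurd h hsep

end DemazureSetup

/-- **Corollary 4.8**:  over an integral domain `R` of characteristic `0`, the
`R`-algebra homomorphism `D_F → End_R(S)` given by the action of `D_F` on `S`
(so that `X_i` acts as the Demazure operator `Δ_i`) is injective:  two elements of
`D_F` inducing the same operator on `S` are equal. -/
theorem DF_to_End_injective
    {R : Type} [CommRing R] [IsDomain R] [CharZero R] (D : DemazureSetup R) :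
    ∀ z ∈ D.DF, ∀ z' ∈ D.DF,
      (∀ a : D.S, D.act z (algebraMap D.S D.Q a) = D.act z' (algebraMap D.S D.Q a)) →
      z = z' := by
  classical
  intro z _ z' _ hact
  obtain ⟨c, hc, -⟩ := D.qw_free z
  obtain ⟨c', hc', -⟩ := D.qw_free z'
  set T : Finset D.W := c.support ∪ c'.support with hT
  have hzT : z = ∑ w ∈ T, D.ι (c w) * D.δ w := by
    rw [hc, Finsupp.sum]
    apply Finset.sum_subset (Finset.subset_union_left)
    intro w _ hw
    rw [Finsupp.notMem_support_iff.mp hw, map_zero, zero_mul]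
  have hz'T : z' = ∑ w ∈ T, D.ι (c' w) * D.δ w := by
    rw [hc', Finsupp.sum]
    apply Finset.sum_subset (Finset.subset_union_right)
    intro w _ hw
    rw [Finsupp.notMem_support_iff.mp hw, map_zero, zero_mul]
  have key : ∀ w ∈ T, (fun v => c v - c' v) w = 0 := by
    apply D.artin T
    intro a
    have h1 := hact a
    rw [hzT, hz'T, D.act_finset_sum, D.act_finset_sum] at h1
    simp only [sub_mul]
    rw [Finset.sum_sub_distrib, h1, sub_self]
  rw [hzT, hz'T]
  apply Finset.sum_congr rfl
  intro w hw
  have := key w hw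
  have hcc : c w = c' w := by
    have h2 := sub_eq_zero.mp this
    exact h2
  rw [hcc]
end

section
/- For each w ∈ W fix a reduced word I_w and set X_{I_w} = X_{i_1}⋯X_{i_l} and Y_{I_w} = Y_{i_1}⋯Y_{i_l}. Then both {X_{I_w}}_{w∈W} and {Y_{I_w}}_{w∈W} are bases of Q_W as a left Q-module. -/
open scoped Classical
noncomputable section
namespace DemazureSetup

variable {R : Type} [CommRing R] (D : DemazureSetup R)

/- ### Word and length basics -/

lemma wordProd_nil : D.wordProd ([] : List (Fin D.n)) = 1 := rfl

lemma wordProd_cons (i : Fin D.n) (ω : List (Fin D.n)) :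
    D.wordProd (i :: ω) = D.s i * D.wordProd ω := by
  simp [wordProd]

lemma wordProd_append (σ τ : List (Fin D.n)) :
    D.wordProd (σ ++ τ) = D.wordProd σ * D.wordProd τ := by
  simp [wordProd]

lemma wordProd_concat (σ : List (Fin D.n)) (j : Fin D.n) :
    D.wordProd (σ ++ [j]) = D.wordProd σ * D.s j := by
  simp [wordProd]

lemma wordProd_singleton (j : Fin D.n) : D.wordProd [j] = D.s j := by
  simp [wordProd]

lemma s_inv (i : Fin D.n) : (D.s i)⁻¹ = D.s i := by
  rw [inv_eq_iff_mul_eq_one, D.s_sq]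

lemma wordProd_reverse (σ : List (Fin D.n)) :
    D.wordProd σ.reverse = (D.wordProd σ)⁻¹ := by
  induction σ with
  | nil => simp [wordProd]
  | cons a σ ih =>
      rw [List.reverse_cons, D.wordProd_concat, ih, D.wordProd_cons, mul_inv_rev, D.s_inv]

lemma exists_word (w : D.W) : ∃ ω : List (Fin D.n), D.wordProd ω = w := by
  have hw : w ∈ Subgroup.closure (Set.range D.s) := by rw [D.s_gen]; trivial
  induction hw using Subgroup.closure_induction with
  | mem x hx => obtain ⟨i, rfl⟩ := hx; exact ⟨[i], by simp [wordProd]⟩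
  | one => exact ⟨[], rfl⟩
  | mul x y hx hy ihx ihy =>
      obtain ⟨σ, rfl⟩ := ihx; obtain ⟨τ, rfl⟩ := ihy
      exact ⟨σ ++ τ, D.wordProd_append σ τ⟩
  | inv x hx ihx =>
      obtain ⟨σ, rfl⟩ := ihx
      exact ⟨σ.reverse, D.wordProd_reverse σ⟩

lemma lenSet_nonempty (w : D.W) :
    {l | ∃ ω : List (Fin D.n), ω.length = l ∧ D.wordProd ω = w}.Nonempty := by
  obtain ⟨ω, hω⟩ := D.exists_word w
  exact ⟨ω.length, ω, rfl, hω⟩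

lemma exists_reduced (w : D.W) :
    ∃ ω : List (Fin D.n), ω.length = D.len w ∧ D.wordProd ω = w :=
  Nat.sInf_mem (D.lenSet_nonempty w)

lemma len_le {w : D.W} {ω : List (Fin D.n)} (h : D.wordProd ω = w) :
    D.len w ≤ ω.length :=
  Nat.sInf_le ⟨ω, rfl, h⟩

lemma len_one : D.len 1 = 0 :=
  Nat.le_zero.mp (D.len_le D.wordProd_nil)

lemma eq_one_of_len_eq_zero {w : D.W} (h : D.len w = 0) : w = 1 := by
  obtain ⟨ω, hl, hp⟩ := D.exists_reduced w
  rw [h, List.length_eq_zero_iff] at hl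
  rw [← hp, hl, wordProd_nil]

lemma len_mul_s_le (w : D.W) (i : Fin D.n) : D.len (w * D.s i) ≤ D.len w + 1 := by
  obtain ⟨ω, hl, hp⟩ := D.exists_reduced w
  have : D.wordProd (ω ++ [i]) = w * D.s i := by rw [wordProd_concat, hp]
  simpa [hl] using D.len_le this

/- ### Positivity: the monoid of nonnegative combinations of simple roots -/

/-- The `ℕ`-span of the simple roots. -/
def Pos : AddSubmonoid D.Λ := AddSubmonoid.closure (Set.range D.sroot)

lemma sroot_mem_Pos (i : Fin D.n) : D.sroot i ∈ D.Pos :=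
  AddSubmonoid.subset_closure ⟨i, rfl⟩

lemma mem_Pos_iff {v : D.Λ} :
    v ∈ D.Pos ↔ ∃ c : Fin D.n → ℕ, v = ∑ k, c k • D.sroot k := by
  constructor
  · intro hv
    induction hv using AddSubmonoid.closure_induction with
    | mem x hx =>
        obtain ⟨i, rfl⟩ := hx
        exact ⟨fun k => if k = i then 1 else 0, by simp⟩
    | zero => exact ⟨0, by simp⟩
    | add x y hx hy ihx ihy =>
        obtain ⟨c, rfl⟩ := ihx; obtain ⟨c', rfl⟩ := ihy
        exact ⟨c + c', by rw [← Finset.sum_add_distrib]; simp [add_smul]⟩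
  · rintro ⟨c, rfl⟩
    exact sum_mem fun k _ => AddSubmonoid.nsmul_mem _ (D.sroot_mem_Pos k) _

/-- Coefficient comparison from linear independence. -/
lemma coords_inj {c c' : Fin D.n → ℤ}
    (h : ∑ k, c k • D.sroot k = ∑ k, c' k • D.sroot k) : c = c' := by
  funext k
  have h0 : ∑ r, (c - c') r • D.sroot r = 0 := by
    simp only [Pi.sub_apply, sub_smul, Finset.sum_sub_distrib, h, sub_self]
  have := Fintype.linearIndependent_iff.mp D.roots_indep (c - c') h0 k
  simp only [Pi.sub_apply, sub_eq_zero] at this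
  exact this

end DemazureSetup
end

noncomputable section
namespace DemazureSetup

/- ### Pure combinatorics of alternating boolean words -/

/-- the `m`-th letter (from the right) of the standard alternating word ending in `false` -/
def cB (m : ℕ) : Bool := decide (m % 2 = 1)

/-- the alternating word of length `m` ending (on the right) with `false` -/
def altE : ℕ → List Bool
  | 0 => []
  | m + 1 => cB m :: altE m

/-- the alternating word of length `m` ending (on the right) with `true` -/
def altE' : ℕ → List Bool
  | 0 => []
  | m + 1 => (!cB m) :: altE' m

lemma cB_succ (m : ℕ) : cB (m + 1) = !cB m := by
  rcases Nat.mod_two_eq_zero_or_one m with h | h <;> simp [cB, Nat.add_mod, h]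

lemma cB_of_even {m : ℕ} (h : m % 2 = 0) : cB m = false := by simp [cB, h]

lemma cB_of_odd {m : ℕ} (h : m % 2 = 1) : cB m = true := by simp [cB, h]

lemma altE_length (m : ℕ) : (altE m).length = m := by
  induction m with
  | zero => rfl
  | succ m ih => simp [altE, ih]

lemma altE'_length (m : ℕ) : (altE' m).length = m := by
  induction m with
  | zero => rfl
  | succ m ih => simp [altE', ih]

/-- every alternating word is one of the two standard alternating words -/
lemma chain'_classify : ∀ ω : List Bool, ω.IsChain (· ≠ ·) →
    ω = altE ω.length ∨ ω = altE' ω.length := by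
  intro ω
  induction ω with
  | nil => intro _; left; rfl
  | cons x σ ih =>
      intro hch
      rw [List.isChain_cons] at hch
      obtain ⟨hhead, hch'⟩ := hch
      rcases ih hch' with hσ | hσ
      · cases σ with
        | nil =>
            cases x
            · left; rfl
            · right; rfl
        | cons z τ =>
            have hz : z = cB τ.length ∧ τ = altE τ.length := by
              have := hσ
              simp only [List.length_cons, altE] at this
              exact ⟨by injection this, by injection this⟩
            have hx : x ≠ z := hhead z (by simp)
            left
            have hxz : x = !z := by
              cases x <;> cases z <;> first | rfl | exact absurd rfl hx
            simp only [List.length_cons, altE, cB_succ]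
            rw [hxz, hz.1, ← hz.2]
      · cases σ with
        | nil =>
            cases x
            · left; rfl
            · right; rfl
        | cons z τ =>
            have hz : z = !cB τ.length ∧ τ = altE' τ.length := by
              have := hσ
              simp only [List.length_cons, altE'] at this
              exact ⟨by injection this, by injection this⟩
            have hx : x ≠ z := hhead z (by simp)
            right
            have hxz : x = !z := by
              cases x <;> cases z <;> first | rfl | exact absurd rfl hx
            simp only [List.length_cons, altE', cB_succ]
            rw [hxz, hz.1, Bool.not_not, ← hz.2]

/-- right-end decompositions of the standard alternating words -/
lemma altE_concat : ∀ m : ℕ, altE (m + 1) = altE' m ++ [false] ∧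
    altE' (m + 1) = altE m ++ [true] := by
  intro m
  induction m with
  | zero => constructor <;> rfl
  | succ m ih =>
      constructor
      · have h1 : altE (m+1+1) = cB (m+1) :: altE (m+1) := rfl
        rw [h1, ih.1, cB_succ]; rfl
      · have h1 : altE' (m+1+1) = (!cB (m+1)) :: altE' (m+1) := rfl
        rw [h1, ih.2, cB_succ, Bool.not_not]; rfl

/- ### The rank-two dihedral analysis -/

variable {R : Type} [CommRing R] (D : DemazureSetup R)

/-- product of word in two fixed letters; `true ↦ i`, `false ↦ j` -/
def pd (i j : Fin D.n) (σ : List Bool) : D.W :=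
  D.wordProd (σ.map (fun e => if e then i else j))

lemma pd_nil (i j : Fin D.n) : D.pd i j [] = 1 := rfl

lemma pd_cons (i j : Fin D.n) (e : Bool) (σ : List Bool) :
    D.pd i j (e :: σ) = D.s (if e then i else j) * D.pd i j σ := by
  simp [pd, wordProd]

lemma pd_concat (i j : Fin D.n) (σ : List Bool) (e : Bool) :
    D.pd i j (σ ++ [e]) = D.pd i j σ * D.s (if e then i else j) := by
  simp [pd, wordProd]

/-- the two-letter length -/
def lD (i j : Fin D.n) (d : D.W) : ℕ :=
  sInf {m | ∃ σ : List Bool, σ.length = m ∧ D.pd i j σ = d}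

lemma lD_le (i j : Fin D.n) {d : D.W} {σ : List Bool} (h : D.pd i j σ = d) :
    D.lD i j d ≤ σ.length :=
  Nat.sInf_le ⟨σ, rfl, h⟩

lemma lD_spec (i j : Fin D.n) {d : D.W} {σ0 : List Bool} (h : D.pd i j σ0 = d) :
    ∃ σ : List Bool, σ.length = D.lD i j d ∧ D.pd i j σ = d := by
  have hne : {m | ∃ σ : List Bool, σ.length = m ∧ D.pd i j σ = d}.Nonempty :=
    ⟨σ0.length, σ0, rfl, h⟩
  exact Nat.sInf_mem hne

/-- a word with an adjacent repetition can be shortened -/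
lemma pd_shorten (i j : Fin D.n) :
    ∀ σ : List Bool, ¬ σ.IsChain (· ≠ ·) →
      ∃ σ' : List Bool, σ'.length + 2 ≤ σ.length ∧ D.pd i j σ' = D.pd i j σ := by
  intro σ
  induction σ with
  | nil => intro h; exact absurd List.isChain_nil h
  | cons x τ ih =>
      intro h
      cases τ with
      | nil => exact absurd (List.isChain_singleton x) h
      | cons y τ' =>
          by_cases hxy : x = y
          · subst hxy
            refine ⟨τ', by simp, ?_⟩
            rw [pd_cons, pd_cons, ← mul_assoc, D.s_sq, one_mul]
          · have : ¬ (y :: τ').IsChain (· ≠ ·) := by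
              intro hc
              exact h (List.isChain_cons_cons.mpr ⟨hxy, hc⟩)
            obtain ⟨σ', hl, hp⟩ := ih this
            refine ⟨x :: σ', by simpa using hl, ?_⟩
            rw [pd_cons, pd_cons, hp]

end DemazureSetup
end

noncomputable section
namespace DemazureSetup

/-- coordinate sequence of the alternating orbit of `α_i` -/
def pseq (a b : ℤ) : ℕ → ℤ × ℤ
  | 0 => (1, 0)
  | m + 1 =>
      if m % 2 = 0 then ((pseq a b m).1, b * (pseq a b m).1 - (pseq a b m).2)
      else (a * (pseq a b m).2 - (pseq a b m).1, (pseq a b m).2)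

lemma pseq_nonneg (a b : ℤ) (ha : 0 ≤ a) (hb : 0 ≤ b) (hab : 4 ≤ a * b) :
    ∀ m : ℕ, 0 ≤ (pseq a b m).1 ∧ 0 ≤ (pseq a b m).2 ∧
      (m % 2 = 0 → 2 * (pseq a b m).2 ≤ b * (pseq a b m).1) ∧
      (m % 2 = 1 → 2 * (pseq a b m).1 ≤ a * (pseq a b m).2) := by
  intro m
  induction m with
  | zero =>
      refine ⟨by norm_num [pseq], by norm_num [pseq], fun _ => ?_, fun h => by norm_num at h⟩
      simp only [pseq]
      linarith
  | succ m ih =>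
      obtain ⟨hp, hq, he, ho⟩ := ih
      rcases Nat.mod_two_eq_zero_or_one m with hm | hm
      · have h2 := he hm
        have hstep : pseq a b (m+1) = ((pseq a b m).1, b * (pseq a b m).1 - (pseq a b m).2) := by
          simp [pseq, hm]
        rw [hstep]
        dsimp only
        have hm1 : (m+1) % 2 = 1 := by omega
        refine ⟨hp, by linarith, fun h => by omega, fun _ => ?_⟩
        nlinarith [mul_le_mul_of_nonneg_left h2 ha, mul_nonneg ha hq,
          mul_le_mul_of_nonneg_right hab hp]
      · have h2 := ho hm
        have hstep : pseq a b (m+1) = (a * (pseq a b m).2 - (pseq a b m).1, (pseq a b m).2) := by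
          simp [pseq, hm]
        rw [hstep]
        dsimp only
        have hm1 : (m+1) % 2 = 0 := by omega
        refine ⟨by linarith, hq, fun _ => ?_, fun h => by omega⟩
        nlinarith [mul_le_mul_of_nonneg_left h2 hb, mul_nonneg hb hp,
          mul_le_mul_of_nonneg_right hab hq]

variable {R : Type} [CommRing R] (D : DemazureSetup R)

/-- the coordinates of `E_m • α_i` -/
lemma pd_altE_smul (i j : Fin D.n) (m : ℕ) :
    D.pd i j (altE m) • D.sroot i =
      (pseq (-(D.scoroot i (D.sroot j))) (-(D.scoroot j (D.sroot i))) m).1 • D.sroot i +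
      (pseq (-(D.scoroot i (D.sroot j))) (-(D.scoroot j (D.sroot i))) m).2 • D.sroot j := by
  set a := -(D.scoroot i (D.sroot j)) with ha
  set b := -(D.scoroot j (D.sroot i)) with hb
  induction m with
  | zero => simp [altE, pd_nil, pseq]
  | succ m ih =>
      have hcons : D.pd i j (altE (m+1)) = D.s (if cB m then i else j) * D.pd i j (altE m) := by
        rw [show altE (m+1) = cB m :: altE m from rfl, pd_cons]
      rw [hcons, mul_smul, ih]
      rcases Nat.mod_two_eq_zero_or_one m with hm | hm
      · rw [cB_of_even hm, if_neg Bool.false_ne_true]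
        rw [D.s_act]
        have hsc : D.scoroot j ((pseq a b m).1 • D.sroot i + (pseq a b m).2 • D.sroot j)
            = (pseq a b m).1 * (-b) + (pseq a b m).2 * 2 := by
          rw [map_add, map_zsmul, map_zsmul, D.cartan_diag, smul_eq_mul, smul_eq_mul, hb]
          ring
        rw [hsc]
        have hstep : pseq a b (m+1) = ((pseq a b m).1, b * (pseq a b m).1 - (pseq a b m).2) := by
          simp [pseq, hm]
        rw [hstep]
        module
      · rw [cB_of_odd hm]
        simp only [if_true]
        rw [D.s_act]
        have hsc : D.scoroot i ((pseq a b m).1 • D.sroot i + (pseq a b m).2 • D.sroot j)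
            = (pseq a b m).1 * 2 + (pseq a b m).2 * (-a) := by
          rw [map_add, map_zsmul, map_zsmul, D.cartan_diag, smul_eq_mul, smul_eq_mul, ha]
          ring
        rw [hsc]
        have hstep : pseq a b (m+1) = (a * (pseq a b m).2 - (pseq a b m).1, (pseq a b m).2) := by
          simp [pseq, hm]
        rw [hstep]
        module

/-- action of a simple reflection on a normal form -/
lemma step_smul_i (i j : Fin D.n) (lam : D.Λ) (x y : ℤ) :
    D.s i • (lam + x • D.sroot i + y • D.sroot j) =
      lam + (-(D.scoroot i lam) - x - (D.scoroot i (D.sroot j)) * y) • D.sroot i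
        + y • D.sroot j := by
  rw [D.s_act]
  have hsc : D.scoroot i (lam + x • D.sroot i + y • D.sroot j)
      = D.scoroot i lam + 2 * x + (D.scoroot i (D.sroot j)) * y := by
    rw [map_add, map_add, map_zsmul, map_zsmul, D.cartan_diag, smul_eq_mul, smul_eq_mul]
    ring
  rw [hsc]
  module

lemma step_smul_j (i j : Fin D.n) (lam : D.Λ) (x y : ℤ) :
    D.s j • (lam + x • D.sroot i + y • D.sroot j) =
      lam + x • D.sroot i
        + (-(D.scoroot j lam) - y - (D.scoroot j (D.sroot i)) * x) • D.sroot j := by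
  rw [D.s_act]
  have hsc : D.scoroot j (lam + x • D.sroot i + y • D.sroot j)
      = D.scoroot j lam + 2 * y + (D.scoroot j (D.sroot i)) * x := by
    rw [map_add, map_add, map_zsmul, map_zsmul, D.cartan_diag, smul_eq_mul, smul_eq_mul]
    ring
  rw [hsc]
  module

end DemazureSetup
end

noncomputable section
namespace DemazureSetup

variable {R : Type} [CommRing R] (D : DemazureSetup R)

lemma eq_of_smul_eq {u v : D.W} (h : ∀ lam : D.Λ, u • lam = v • lam) : u = v := by
  have h1 : ∀ lam : D.Λ, (v⁻¹ * u) • lam = lam := fun lam => by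
    rw [mul_smul, h, inv_smul_smul]
  have h2 := D.act_faithful _ h1
  exact (inv_mul_eq_one.mp h2).symm

lemma rel00 (i j : Fin D.n) (hA : D.scoroot i (D.sroot j) = 0)
    (hB : D.scoroot j (D.sroot i) = 0) :
    D.pd i j (altE 2) = D.pd i j (altE' 2) := by
  apply D.eq_of_smul_eq
  intro lam
  show (D.s i * (D.s j * 1)) • lam = (D.s j * (D.s i * 1)) • lam
  simp only [mul_one, mul_smul]
  conv_lhs => rw [show lam = lam + (0:ℤ) • D.sroot i + (0:ℤ) • D.sroot j by simp]
  conv_rhs => rw [show lam = lam + (0:ℤ) • D.sroot i + (0:ℤ) • D.sroot j by simp]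
  simp only [step_smul_i, step_smul_j, hA, hB]
  module

lemma rel11 (i j : Fin D.n) (hA : D.scoroot i (D.sroot j) = -1)
    (hB : D.scoroot j (D.sroot i) = -1) :
    D.pd i j (altE 3) = D.pd i j (altE' 3) := by
  apply D.eq_of_smul_eq
  intro lam
  show (D.s j * (D.s i * (D.s j * (1)))) • lam = (D.s i * (D.s j * (D.s i * (1)))) • lam
  simp only [mul_one, mul_smul]
  conv_lhs => rw [show lam = lam + (0:ℤ) • D.sroot i + (0:ℤ) • D.sroot j by simp]
  conv_rhs => rw [show lam = lam + (0:ℤ) • D.sroot i + (0:ℤ) • D.sroot j by simp]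
  simp only [step_smul_i, step_smul_j, hA, hB]
  module

lemma rel12 (i j : Fin D.n) (hA : D.scoroot i (D.sroot j) = -1)
    (hB : D.scoroot j (D.sroot i) = -2) :
    D.pd i j (altE 4) = D.pd i j (altE' 4) := by
  apply D.eq_of_smul_eq
  intro lam
  show (D.s i * (D.s j * (D.s i * (D.s j * (1))))) • lam = (D.s j * (D.s i * (D.s j * (D.s i * (1))))) • lam
  simp only [mul_one, mul_smul]
  conv_lhs => rw [show lam = lam + (0:ℤ) • D.sroot i + (0:ℤ) • D.sroot j by simp]
  conv_rhs => rw [show lam = lam + (0:ℤ) • D.sroot i + (0:ℤ) • D.sroot j by simp]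
  simp only [step_smul_i, step_smul_j, hA, hB]
  module

lemma rel21 (i j : Fin D.n) (hA : D.scoroot i (D.sroot j) = -2)
    (hB : D.scoroot j (D.sroot i) = -1) :
    D.pd i j (altE 4) = D.pd i j (altE' 4) := by
  apply D.eq_of_smul_eq
  intro lam
  show (D.s i * (D.s j * (D.s i * (D.s j * (1))))) • lam = (D.s j * (D.s i * (D.s j * (D.s i * (1))))) • lam
  simp only [mul_one, mul_smul]
  conv_lhs => rw [show lam = lam + (0:ℤ) • D.sroot i + (0:ℤ) • D.sroot j by simp]
  conv_rhs => rw [show lam = lam + (0:ℤ) • D.sroot i + (0:ℤ) • D.sroot j by simp]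
  simp only [step_smul_i, step_smul_j, hA, hB]
  module

lemma rel13 (i j : Fin D.n) (hA : D.scoroot i (D.sroot j) = -1)
    (hB : D.scoroot j (D.sroot i) = -3) :
    D.pd i j (altE 6) = D.pd i j (altE' 6) := by
  apply D.eq_of_smul_eq
  intro lam
  show (D.s i * (D.s j * (D.s i * (D.s j * (D.s i * (D.s j * (1))))))) • lam = (D.s j * (D.s i * (D.s j * (D.s i * (D.s j * (D.s i * (1))))))) • lam
  simp only [mul_one, mul_smul]
  conv_lhs => rw [show lam = lam + (0:ℤ) • D.sroot i + (0:ℤ) • D.sroot j by simp]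
  conv_rhs => rw [show lam = lam + (0:ℤ) • D.sroot i + (0:ℤ) • D.sroot j by simp]
  simp only [step_smul_i, step_smul_j, hA, hB]
  module

lemma rel31 (i j : Fin D.n) (hA : D.scoroot i (D.sroot j) = -3)
    (hB : D.scoroot j (D.sroot i) = -1) :
    D.pd i j (altE 6) = D.pd i j (altE' 6) := by
  apply D.eq_of_smul_eq
  intro lam
  show (D.s i * (D.s j * (D.s i * (D.s j * (D.s i * (D.s j * (1))))))) • lam = (D.s j * (D.s i * (D.s j * (D.s i * (D.s j * (D.s i * (1))))))) • lam
  simp only [mul_one, mul_smul]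
  conv_lhs => rw [show lam = lam + (0:ℤ) • D.sroot i + (0:ℤ) • D.sroot j by simp]
  conv_rhs => rw [show lam = lam + (0:ℤ) • D.sroot i + (0:ℤ) • D.sroot j by simp]
  simp only [step_smul_i, step_smul_j, hA, hB]
  module

end DemazureSetup
end

noncomputable section
namespace DemazureSetup

variable {R : Type} [CommRing R] (D : DemazureSetup R)

lemma lD_altE_le (i j : Fin D.n) (m1 : ℕ)
    (hrel : D.pd i j (altE (m1 + 1)) = D.pd i j (altE' (m1 + 1))) :
    ∀ k : ℕ, D.lD i j (D.pd i j (altE (m1 + 2 + k))) ≤ m1 + k := by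
  intro k
  induction k with
  | zero =>
      have h1 : altE (m1 + 2) = cB (m1 + 1) :: altE (m1 + 1) := rfl
      have h2 : altE' (m1 + 1) = (!cB m1) :: altE' m1 := rfl
      have hkey : D.pd i j (altE (m1 + 2 + 0)) = D.pd i j (altE' m1) := by
        rw [Nat.add_zero, h1, pd_cons, hrel, h2, pd_cons, ← mul_assoc, cB_succ,
          D.s_sq, one_mul]
      have := D.lD_le i j hkey.symm
      -- careful: lD_le needs `pd σ = d`, here d is the element
      simpa [altE'_length] using D.lD_le i j (hkey ▸ rfl : D.pd i j (altE' m1) = D.pd i j (altE (m1 + 2 + 0)))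
  | succ k ih =>
      obtain ⟨σ, hlen, hσ⟩ := D.lD_spec i j (rfl : D.pd i j (altE (m1 + 2 + k)) = _)
      have h1 : altE (m1 + 2 + (k + 1)) = cB (m1 + 2 + k) :: altE (m1 + 2 + k) := rfl
      have hkey : D.pd i j (cB (m1 + 2 + k) :: σ) = D.pd i j (altE (m1 + 2 + (k+1))) := by
        rw [h1, pd_cons, pd_cons, hσ]
      have := D.lD_le i j hkey
      simp only [List.length_cons] at this
      omega

lemma lt_m0_of_rel (i j : Fin D.n) (m0 : ℕ) (hm0 : 1 ≤ m0)
    (hrel : D.pd i j (altE m0) = D.pd i j (altE' m0))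
    (d : D.W) (m : ℕ) (hmd : D.lD i j d = m) (hd : D.pd i j (altE m) = d)
    (hge : m ≤ D.lD i j (d * D.s i)) : m < m0 := by
  obtain ⟨m1, rfl⟩ : ∃ m1, m0 = m1 + 1 := ⟨m0 - 1, by omega⟩
  rcases lt_trichotomy m (m1 + 1) with h | h | h
  · exact h
  · -- m = m0 : then d also ends in the letter i, contradiction with hge
    exfalso
    subst h
    have hconc : altE' (m1 + 1) = altE m1 ++ [true] := (altE_concat m1).2
    have hd' : D.pd i j (altE m1) * D.s i = d := by
      rw [← hd, hrel, hconc, pd_concat, if_pos rfl]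
    have hkill : D.pd i j (altE m1) = d * D.s i := by
      rw [← hd', mul_assoc, D.s_sq, mul_one]
    have h2 := D.lD_le i j hkill
    rw [altE_length] at h2
    omega
  · -- m > m0 : the word altE m is not reduced
    exfalso
    have hb := D.lD_altE_le i j m1 hrel (m - m1 - 2)
    have hidx : m1 + 2 + (m - m1 - 2) = m := by omega
    rw [hidx, hd, hmd] at hb
    omega

lemma coords_to_nat (i j : Fin D.n) {p q : ℤ} (hp : 0 ≤ p) (hq : 0 ≤ q) {v : D.Λ}
    (h : v = p • D.sroot i + q • D.sroot j) :
    ∃ x y : ℕ, v = x • D.sroot i + y • D.sroot j := by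
  refine ⟨p.toNat, q.toNat, ?_⟩
  calc v = p • D.sroot i + q • D.sroot j := h
    _ = ((p.toNat : ℤ)) • D.sroot i + ((q.toNat : ℤ)) • D.sroot j := by
          rw [Int.toNat_of_nonneg hp, Int.toNat_of_nonneg hq]
    _ = p.toNat • D.sroot i + q.toNat • D.sroot j := by
          rw [natCast_zsmul, natCast_zsmul]

lemma dihedral_case (i j : Fin D.n) (m0 : ℕ) (hm0 : 1 ≤ m0)
    (hrel : D.pd i j (altE m0) = D.pd i j (altE' m0))
    (hnn : ∀ m, m < m0 →
      0 ≤ (pseq (-(D.scoroot i (D.sroot j))) (-(D.scoroot j (D.sroot i))) m).1 ∧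
      0 ≤ (pseq (-(D.scoroot i (D.sroot j))) (-(D.scoroot j (D.sroot i))) m).2)
    (d : D.W) (m : ℕ) (hmd : D.lD i j d = m) (hd : D.pd i j (altE m) = d)
    (hge : m ≤ D.lD i j (d * D.s i)) :
    ∃ x y : ℕ, d • D.sroot i = x • D.sroot i + y • D.sroot j := by
  have hlt := D.lt_m0_of_rel i j m0 hm0 hrel d m hmd hd hge
  obtain ⟨hp, hq⟩ := hnn m hlt
  have coords := D.pd_altE_smul i j m
  rw [hd] at coords
  exact D.coords_to_nat i j hp hq coords

/-- The key rank-two positivity lemma. -/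
lemma dihedral_pos (i j : Fin D.n) (hij : i ≠ j) (d : D.W) (σ0 : List Bool)
    (hd0 : D.pd i j σ0 = d) (hge : D.lD i j d ≤ D.lD i j (d * D.s i)) :
    ∃ x y : ℕ, d • D.sroot i = x • D.sroot i + y • D.sroot j := by
  obtain ⟨σ, hlen, hσ⟩ := D.lD_spec i j hd0
  have hch : σ.IsChain (· ≠ ·) := by
    by_contra hc
    obtain ⟨σ', hl, hp⟩ := D.pd_shorten i j σ hc
    have hle := D.lD_le i j (hp.trans hσ)
    omega
  rcases Nat.eq_zero_or_pos (D.lD i j d) with hm0 | hmpos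
  · -- d = 1
    rw [hm0] at hlen
    have : σ = [] := List.length_eq_zero_iff.mp hlen
    rw [this] at hσ
    rw [← hσ, pd_nil]
    exact ⟨1, 0, by simp⟩
  rcases chain'_classify σ hch with he | he
  · -- σ = altE m
    rw [hlen] at he
    have hd : D.pd i j (altE (D.lD i j d)) = d := by rw [← he]; exact hσ
    -- case analysis on the Cartan integers
    obtain ⟨A, hA⟩ : ∃ A, D.scoroot i (D.sroot j) = A := ⟨_, rfl⟩
    obtain ⟨B, hB⟩ : ∃ B, D.scoroot j (D.sroot i) = B := ⟨_, rfl⟩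
    have hA0 : A ≤ 0 := hA ▸ D.cartan_off i j hij
    have hB0 : B ≤ 0 := hB ▸ D.cartan_off j i (Ne.symm hij)
    by_cases h4 : 4 ≤ A * B
    · -- infinite case: all coordinates nonnegative
      have hnn := pseq_nonneg (-A) (-B) (by omega) (by omega) (by nlinarith)
      have coords := D.pd_altE_smul i j (D.lD i j d)
      rw [hd, hA, hB] at coords
      exact D.coords_to_nat i j (hnn _).1 (hnn _).2.1 coords
    · -- finite cases
      have hAB3 : A * B ≤ 3 := by omega
      have hABnn : 0 ≤ A * B := by nlinarith
      by_cases hAz : A = 0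
      · have hBz : B = 0 := by
          have := (D.cartan_zero i j).mp (hA.symm ▸ hAz ▸ hA ▸ (by rw [hA, hAz]))
          rw [hB] at this; exact this
        refine D.dihedral_case i j 2 (by norm_num) (D.rel00 i j (by rw [hA, hAz]) (by rw [hB, hBz]))
          ?_ d _ rfl hd hge
        intro m hm
        rw [hA, hB, hAz, hBz]
        interval_cases m <;> exact ⟨by decide, by decide⟩
      · have hBz : B ≠ 0 := by
          intro h0
          exact hAz (by rw [← hA]; exact (D.cartan_zero i j).mpr (by rw [hB, h0]))
        have hA1 : A ≤ -1 := by omega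
        have hB1 : B ≤ -1 := by omega
        have hAl : -3 ≤ A := by nlinarith
        have hBl : -3 ≤ B := by nlinarith
        interval_cases A <;> interval_cases B <;> first
          | (refine D.dihedral_case i j 3 (by norm_num) (D.rel11 i j hA hB) ?_ d _ rfl hd hge
             intro m hm
             rw [hA, hB]
             interval_cases m <;> exact ⟨by decide, by decide⟩)
          | (refine D.dihedral_case i j 4 (by norm_num) (D.rel12 i j hA hB) ?_ d _ rfl hd hge
             intro m hm
             rw [hA, hB]
             interval_cases m <;> exact ⟨by decide, by decide⟩)
          | (refine D.dihedral_case i j 4 (by norm_num) (D.rel21 i j hA hB) ?_ d _ rfl hd hge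
             intro m hm
             rw [hA, hB]
             interval_cases m <;> exact ⟨by decide, by decide⟩)
          | (refine D.dihedral_case i j 6 (by norm_num) (D.rel13 i j hA hB) ?_ d _ rfl hd hge
             intro m hm
             rw [hA, hB]
             interval_cases m <;> exact ⟨by decide, by decide⟩)
          | (refine D.dihedral_case i j 6 (by norm_num) (D.rel31 i j hA hB) ?_ d _ rfl hd hge
             intro m hm
             rw [hA, hB]
             interval_cases m <;> exact ⟨by decide, by decide⟩)
          | (exfalso; norm_num at h4)
  · -- σ = altE' m : the minimal word ends with the letter i, contradiction
    exfalso
    rw [hlen] at he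
    obtain ⟨m1, hm1⟩ : ∃ m1, D.lD i j d = m1 + 1 := ⟨D.lD i j d - 1, by omega⟩
    rw [hm1] at he
    have hconc : altE' (m1 + 1) = altE m1 ++ [true] := (altE_concat m1).2
    have hd' : D.pd i j (altE m1) * D.s i = d := by
      rw [← hσ, he, hconc, pd_concat, if_pos rfl]
    have hkill : D.pd i j (altE m1) = d * D.s i := by
      rw [← hd', mul_assoc, D.s_sq, mul_one]
    have h2 := D.lD_le i j hkill
    rw [altE_length] at h2
    omega

end DemazureSetup
end

noncomputable section
namespace DemazureSetup

variable {R : Type} [CommRing R] (D : DemazureSetup R)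

lemma smul_nsmul_comm (v : D.W) (x : ℕ) (u : D.Λ) : v • (x • u) = x • (v • u) :=
  AddMonoidHom.map_nsmul (DistribMulAction.toAddMonoidHom D.Λ v) x u

lemma smul_zsmul_comm (v : D.W) (x : ℤ) (u : D.Λ) : v • (x • u) = x • (v • u) :=
  map_zsmul (DistribMulAction.toAddMonoidHom D.Λ v) x u

lemma s_smul_self (k : Fin D.n) : D.s k • D.sroot k = -(D.sroot k) := by
  rw [D.s_act, D.cartan_diag]
  module

lemma len_mul_pd_le (i j : Fin D.n) (v : D.W) (τ : List Bool) :
    D.len (v * D.pd i j τ) ≤ D.len v + τ.length := by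
  obtain ⟨ρ, hρl, hρp⟩ := D.exists_reduced v
  have hkey : D.wordProd (ρ ++ τ.map (fun e => if e then i else j)) = v * D.pd i j τ := by
    rw [wordProd_append, hρp]; rfl
  have h2 := D.len_le hkey
  simp only [List.length_append, List.length_map, hρl] at h2
  exact h2

/-- **The fundamental lemma**: if `len (w s_i) ≥ len w` then `w • α_i` is a
nonnegative combination of simple roots. -/
lemma FL : ∀ (nn : ℕ) (w : D.W) (i : Fin D.n), D.len w = nn →
    D.len w ≤ D.len (w * D.s i) → w • D.sroot i ∈ D.Pos := by
  intro nn
  induction nn using Nat.strong_induction_on with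
  | _ nn ih =>
    intro w i hlen hge
    rcases Nat.eq_zero_or_pos nn with h0 | hpos
    · have hw1 : w = 1 := D.eq_one_of_len_eq_zero (by omega)
      rw [hw1, one_smul]
      exact D.sroot_mem_Pos i
    · -- extract the last letter of a reduced word for w
      obtain ⟨ω0, hl0, hp0⟩ := D.exists_reduced w
      rcases List.eq_nil_or_concat ω0 with hnil | ⟨σ0, j, rfl⟩
      · rw [hnil] at hl0; simp at hl0; omega
      simp only [List.concat_eq_append] at hl0 hp0
      have hσl : σ0.length + 1 = nn := by
        have := hl0.trans hlen
        simpa using this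
      have hwj : w * D.s j = D.wordProd σ0 := by
        rw [← hp0, wordProd_concat, mul_assoc, D.s_sq, mul_one]
      have hj : D.len (w * D.s j) < D.len w := by
        have := D.len_le hwj.symm
        omega
      have hij : i ≠ j := by
        intro h
        rw [h] at hge
        omega
      -- minimal coset representative
      set TS : Set ℕ := {k | ∃ v : D.W, ∃ σ : List Bool,
        D.len v = k ∧ w = v * D.pd i j σ ∧ D.len v + σ.length ≤ D.len w} with hTSdef
      have hTS : TS.Nonempty := by
        refine ⟨D.len (w * D.s j), w * D.s j, [false], rfl, ?_, ?_⟩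
        · rw [pd_cons, if_neg Bool.false_ne_true, pd_nil, mul_one, mul_assoc, D.s_sq, mul_one]
        · simp only [List.length_singleton]
          omega
      obtain ⟨v, σd, hkv, hw, hbound⟩ := Nat.sInf_mem hTS
      -- minimality in the i and j directions
      have hvi : D.len v ≤ D.len (v * D.s i) := by
        by_contra hlt
        push_neg at hlt
        have hmem : D.len (v * D.s i) ∈ TS := by
          refine ⟨v * D.s i, true :: σd, rfl, ?_, ?_⟩
          · rw [pd_cons, if_pos rfl, mul_assoc, ← mul_assoc (D.s i), D.s_sq, one_mul, ← hw]
          · simp only [List.length_cons]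
            omega
        have := Nat.sInf_le hmem
        omega
      have hvj : D.len v ≤ D.len (v * D.s j) := by
        by_contra hlt
        push_neg at hlt
        have hmem : D.len (v * D.s j) ∈ TS := by
          refine ⟨v * D.s j, false :: σd, rfl, ?_, ?_⟩
          · rw [pd_cons, if_neg Bool.false_ne_true, mul_assoc, ← mul_assoc (D.s j), D.s_sq,
              one_mul, ← hw]
          · simp only [List.length_cons]
            omega
        have := Nat.sInf_le hmem
        omega
      -- σd cannot be empty
      rcases List.eq_nil_or_concat σd with hσnil | ⟨l0, e0, hσd⟩
      · exfalso
        rw [hσnil, pd_nil, mul_one] at hw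
        rw [← hw] at hvj
        omega
      have hσlen : 1 ≤ σd.length := by rw [hσd]; simp
      have hvlt : D.len v < D.len w := by omega
      -- the dihedral dichotomy
      set d := D.pd i j σd with hd
      by_cases hdich : D.lD i j d ≤ D.lD i j (d * D.s i)
      · obtain ⟨x, y, hxy⟩ := D.dihedral_pos i j hij d σd hd.symm hdich
        have hvP_i : v • D.sroot i ∈ D.Pos := ih (D.len v) (by omega) v i rfl hvi
        have hvP_j : v • D.sroot j ∈ D.Pos := ih (D.len v) (by omega) v j rfl hvj
        have hcomb : w • D.sroot i = x • (v • D.sroot i) + y • (v • D.sroot j) := by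
          rw [hw, mul_smul, hxy, smul_add, smul_nsmul_comm, smul_nsmul_comm]
        rw [hcomb]
        exact AddSubmonoid.add_mem _ (AddSubmonoid.nsmul_mem _ hvP_i _)
          (AddSubmonoid.nsmul_mem _ hvP_j _)
      · exfalso
        push_neg at hdich
        have hexd : D.pd i j (σd ++ [true]) = d * D.s i := by
          rw [pd_concat, if_pos rfl, ← hd]
        obtain ⟨τ, hτl, hτp⟩ := D.lD_spec i j hexd
        have hwsi : D.len (w * D.s i) ≤ D.len v + τ.length := by
          have : w * D.s i = v * D.pd i j τ := by rw [hw, mul_assoc, hτp]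
          rw [this]
          exact D.len_mul_pd_le i j v τ
        have hlDd : D.lD i j d ≤ σd.length := D.lD_le i j hd.symm
        omega

/-- Every real root is a nonnegative or nonpositive combination of simple roots. -/
lemma root_pos_or_neg (w : D.W) (i : Fin D.n) :
    w • D.sroot i ∈ D.Pos ∨ -(w • D.sroot i) ∈ D.Pos := by
  by_cases h : D.len w ≤ D.len (w * D.s i)
  · exact Or.inl (D.FL (D.len w) w i rfl h)
  · right
    push_neg at h
    have hw' : (w * D.s i) * D.s i = w := by rw [mul_assoc, D.s_sq, mul_one]
    have h2 : D.len (w * D.s i) ≤ D.len ((w * D.s i) * D.s i) := by rw [hw']; omega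
    have h3 := D.FL (D.len (w * D.s i)) (w * D.s i) i rfl h2
    have : -(w • D.sroot i) = (w * D.s i) • D.sroot i := by
      rw [mul_smul, D.s_smul_self, smul_neg]
    rw [this]
    exact h3

/-- an element of `W` fixing all simple roots is the identity -/
lemma eq_one_of_fixes (w : D.W) (h : ∀ k, w • D.sroot k = D.sroot k) : w = 1 := by
  by_contra hne
  have hpos : 0 < D.len w := by
    rcases Nat.eq_zero_or_pos (D.len w) with h0 | h1
    · exact absurd (D.eq_one_of_len_eq_zero h0) hne
    · exact h1
  obtain ⟨ω0, hl0, hp0⟩ := D.exists_reduced w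
  rcases List.eq_nil_or_concat ω0 with hnil | ⟨σ0, k, rfl⟩
  · rw [hnil] at hl0; simp at hl0; omega
  simp only [List.concat_eq_append] at hl0 hp0
  have hσl : σ0.length + 1 = D.len w := by simpa using hl0
  have hwk : w * D.s k = D.wordProd σ0 := by
    rw [← hp0, wordProd_concat, mul_assoc, D.s_sq, mul_one]
  have hj : D.len (w * D.s k) < D.len w := by
    have := D.len_le hwk.symm
    omega
  have hge : D.len (w * D.s k) ≤ D.len ((w * D.s k) * D.s k) := by
    rw [mul_assoc, D.s_sq, mul_one]
    omega
  have hP := D.FL (D.len (w * D.s k)) (w * D.s k) k rfl hge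
  have hcontra : (w * D.s k) • D.sroot k = -(D.sroot k) := by
    rw [mul_smul, D.s_smul_self, smul_neg, h k]
  rw [hcontra] at hP
  -- -(α_k) cannot be a nonnegative combination
  obtain ⟨c, hc⟩ := D.mem_Pos_iff.mp hP
  have hzero : ∑ r, (fun r => (c r : ℤ) + (if r = k then 1 else 0)) r • D.sroot r
      = ∑ r, (0 : ℤ) • D.sroot r := by
    simp only [add_smul, Finset.sum_add_distrib, ite_smul, one_smul, zero_smul,
      Finset.sum_ite_eq', Finset.mem_univ, if_true]
    simp only [natCast_zsmul]
    rw [← hc]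
    simp
  have := congrFun (D.coords_inj hzero) k
  have h2 : (c k : ℤ) + 1 = 0 := by simpa using this
  omega

/-- a vector `α_k + c α_i` with `c < 0`, `k ≠ i` is neither nonneg nor nonpos -/
lemma no_mixed_sign (k i : Fin D.n) (hki : k ≠ i) (c : ℤ) (hc : c < 0) :
    ¬(D.sroot k + c • D.sroot i ∈ D.Pos ∨ -(D.sroot k + c • D.sroot i) ∈ D.Pos) := by
  have hsum : ∀ z1 z2 : ℤ, z1 • D.sroot k + z2 • D.sroot i
      = ∑ r, ((if r = k then z1 else 0) + (if r = i then z2 else 0)) • D.sroot r := by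
    intro z1 z2
    simp only [add_smul, Finset.sum_add_distrib, ite_smul, zero_smul,
      Finset.sum_ite_eq', Finset.mem_univ, if_true]
  rintro (hP | hP) <;> obtain ⟨m, hm⟩ := D.mem_Pos_iff.mp hP
  · have h1 : ∑ r, ((if r = k then (1:ℤ) else 0) + (if r = i then c else 0)) • D.sroot r
        = ∑ r, ((m r : ℤ)) • D.sroot r := by
      rw [← hsum, one_smul]
      rw [hm]
      congr 1
      funext r
      rw [natCast_zsmul]
    have := congrFun (D.coords_inj h1) i
    simp [if_neg (Ne.symm hki)] at this
    omega
  · have h1 : ∑ r, ((if r = k then (-1:ℤ) else 0) + (if r = i then -c else 0)) • D.sroot r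
        = ∑ r, ((m r : ℤ)) • D.sroot r := by
      rw [← hsum]
      rw [show (-1:ℤ) • D.sroot k + (-c) • D.sroot i = -(D.sroot k + c • D.sroot i) by module]
      rw [hm]
      congr 1
      funext r
      rw [natCast_zsmul]
    have := congrFun (D.coords_inj h1) k
    have h2 : (-1 : ℤ) + 0 = (m k : ℤ) := by
      simp only [if_neg hki, if_pos rfl] at this
      rw [← this]
      simp
    omega

/-- uniqueness of reflections: if `w₀ • α_j = α_i` then `w₀ s_j w₀⁻¹ = s_i`. -/
lemma conj_eq_s (w0 : D.W) (j i : Fin D.n) (h : w0 • D.sroot j = D.sroot i) :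
    w0 * D.s j * w0⁻¹ = D.s i := by
  have hinv : w0⁻¹ • D.sroot i = D.sroot j := by rw [← h, inv_smul_smul]
  have hs' : ∀ lam : D.Λ, (w0 * D.s j * w0⁻¹) • lam
      = lam - (D.scoroot j (w0⁻¹ • lam)) • D.sroot i := by
    intro lam
    rw [mul_smul, mul_smul, D.s_act, smul_sub, smul_zsmul_comm, smul_inv_smul, h]
  set t := D.s i * (w0 * D.s j * w0⁻¹) with ht
  have htact : ∀ lam : D.Λ, t • lam
      = lam + (D.scoroot j (w0⁻¹ • lam) - D.scoroot i lam) • D.sroot i := by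
    intro lam
    rw [ht, mul_smul, hs' lam, D.s_act]
    have hsc : D.scoroot i (lam - (D.scoroot j (w0⁻¹ • lam)) • D.sroot i)
        = D.scoroot i lam - 2 * D.scoroot j (w0⁻¹ • lam) := by
      rw [map_sub, map_zsmul, D.cartan_diag, smul_eq_mul]
      ring
    rw [hsc]
    module
  have htinv : ∀ lam : D.Λ, t⁻¹ • lam
      = lam - (D.scoroot j (w0⁻¹ • lam) - D.scoroot i lam) • D.sroot i := by
    intro lam
    have hcoef : D.scoroot j (w0⁻¹ • (lam - (D.scoroot j (w0⁻¹ • lam) - D.scoroot i lam) • D.sroot i))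
          - D.scoroot i (lam - (D.scoroot j (w0⁻¹ • lam) - D.scoroot i lam) • D.sroot i)
        = D.scoroot j (w0⁻¹ • lam) - D.scoroot i lam := by
      simp only [smul_sub, smul_zsmul_comm, hinv, map_sub, map_zsmul, D.cartan_diag,
        smul_eq_mul]
      ring
    have hback : t • (lam - (D.scoroot j (w0⁻¹ • lam) - D.scoroot i lam) • D.sroot i) = lam := by
      rw [htact, hcoef]
      module
    calc t⁻¹ • lam
        = t⁻¹ • (t • (lam - (D.scoroot j (w0⁻¹ • lam) - D.scoroot i lam) • D.sroot i)) := by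
          rw [hback]
      _ = lam - (D.scoroot j (w0⁻¹ • lam) - D.scoroot i lam) • D.sroot i := inv_smul_smul t _
  -- t fixes all simple roots
  have hfix : ∀ k, t • D.sroot k = D.sroot k := by
    intro k
    by_cases hki : k = i
    · subst hki
      rw [htact, hinv, D.cartan_diag, D.cartan_diag]
      module
    · rcases lt_trichotomy (D.scoroot j (w0⁻¹ • D.sroot k) - D.scoroot i (D.sroot k)) 0
        with hlt | heq | hgt
      · exfalso
        have hroot := D.root_pos_or_neg t k
        rw [htact] at hroot
        exact D.no_mixed_sign k i hki _ hlt hroot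
      · rw [htact, heq]
        module
      · exfalso
        have hroot := D.root_pos_or_neg t⁻¹ k
        rw [htinv, sub_eq_add_neg, ← neg_smul] at hroot
        exact D.no_mixed_sign k i hki _ (by omega) hroot
  have ht1 : t = 1 := D.eq_one_of_fixes t hfix
  have h1 : D.s i * (w0 * D.s j * w0⁻¹) = 1 := by rw [← ht]; exact ht1
  have h2 : (D.s i)⁻¹ = w0 * D.s j * w0⁻¹ := mul_eq_one_iff_inv_eq.mp h1
  rw [← h2, D.s_inv]

/-- the chosen reflection of a simple root is the corresponding simple reflection -/
lemma refl_sroot (i : Fin D.n) : D.refl (D.sroot i) = D.s i := by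
  have hmem : D.sroot i ∈ D.roots := ⟨1, i, (one_smul _ _).symm⟩
  rw [refl, dif_pos hmem]
  exact D.conj_eq_s _ _ i hmem.choose_spec.choose_spec.symm

end DemazureSetup
end

noncomputable section
namespace DemazureSetup

variable {R : Type} [CommRing R] (D : DemazureSetup R)

/-- `Q_W` as a left `Q`-module via `ι` -/
instance instModQQW : Module D.Q D.QW := Module.compHom D.QW D.ι

lemma q_smul_def (q : D.Q) (z : D.QW) : q • z = D.ι q * z := rfl

/-- the `δ`-coordinates of an element of `Q_W` -/
def coeff (z : D.QW) : D.W →₀ D.Q := (D.qw_free z).exists.choose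

lemma coeff_spec (z : D.QW) : z = (D.coeff z).sum fun w q => D.ι q * D.δ w :=
  (D.qw_free z).exists.choose_spec

lemma coeff_unique {z : D.QW} {c : D.W →₀ D.Q}
    (h : z = c.sum fun w q => D.ι q * D.δ w) : c = D.coeff z := by
  obtain ⟨c', hc', huniq⟩ := D.qw_free z
  rw [huniq c h, huniq (D.coeff z) (D.coeff_spec z)]

lemma sum_delta_add (c c' : D.W →₀ D.Q) :
    ((c + c').sum fun w q => D.ι q * D.δ w)
      = (c.sum fun w q => D.ι q * D.δ w) + (c'.sum fun w q => D.ι q * D.δ w) :=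
  Finsupp.sum_add_index' (fun w => by simp) (fun w q1 q2 => by rw [map_add, add_mul])

lemma coeff_add (z z' : D.QW) : D.coeff (z + z') = D.coeff z + D.coeff z' :=
  (D.coeff_unique (by rw [sum_delta_add, ← D.coeff_spec, ← D.coeff_spec])).symm

lemma coeff_smul (q : D.Q) (z : D.QW) : D.coeff (q • z) = q • D.coeff z := by
  refine (D.coeff_unique ?_).symm
  rw [Finsupp.sum_smul_index' (fun w => by simp)]
  rw [q_smul_def]
  conv_lhs => rw [D.coeff_spec z]
  rw [Finsupp.sum, Finsupp.sum, Finset.mul_sum]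
  refine Finset.sum_congr rfl fun w _ => ?_
  rw [smul_eq_mul, map_mul, mul_assoc]

lemma coeff_zero : D.coeff (0 : D.QW) = 0 :=
  (D.coeff_unique (by simp [Finsupp.sum_zero_index])).symm

lemma coeff_iota_delta (q : D.Q) (w : D.W) :
    D.coeff (D.ι q * D.δ w) = Finsupp.single w q :=
  (D.coeff_unique (by rw [Finsupp.sum_single_index (by simp)])).symm

lemma coeff_delta (w : D.W) : D.coeff (D.δ w) = Finsupp.single w 1 := by
  have := D.coeff_iota_delta 1 w
  rwa [map_one, one_mul] at this

lemma coeff_span_zero {T : Set D.W} {z : D.QW}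
    (hz : z ∈ Submodule.span D.Q (D.δ '' T)) (v : D.W) (hv : v ∉ T) :
    D.coeff z v = 0 := by
  induction hz using Submodule.span_induction with
  | mem x hx =>
      obtain ⟨u, hu, rfl⟩ := hx
      rw [coeff_delta]
      exact Finsupp.single_eq_of_ne (fun h => hv (h ▸ hu))
  | zero => rw [coeff_zero]; rfl
  | add x y _ _ hx hy => rw [coeff_add]; simp [hx, hy]
  | smul q x _ hx =>
      rw [coeff_smul]
      simp only [Finsupp.smul_apply, hx, smul_eq_mul, mul_zero]

lemma delta_mul_span {T : Set D.W} {z : D.QW} (y : D.W)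
    (hz : z ∈ Submodule.span D.Q (D.δ '' T)) :
    D.δ y * z ∈ Submodule.span D.Q (D.δ '' ((fun v => y * v) '' T)) := by
  induction hz using Submodule.span_induction with
  | mem x hx =>
      obtain ⟨u, hu, rfl⟩ := hx
      rw [← map_mul]
      exact Submodule.subset_span ⟨y * u, ⟨u, hu, rfl⟩, rfl⟩
  | zero => rw [mul_zero]; exact Submodule.zero_mem _
  | add x y' _ _ hx hy => rw [mul_add]; exact Submodule.add_mem _ hx hy
  | smul q x _ hx =>
      have : D.δ y * (q • x) = (y • q) • (D.δ y * x) := by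
        rw [q_smul_def, q_smul_def, ← mul_assoc, D.twist, mul_assoc]
      rw [this]
      exact Submodule.smul_mem _ _ hx

end DemazureSetup
end

noncomputable section
namespace DemazureSetup

variable {R : Type} [CommRing R] (D : DemazureSetup R)

/-- products of proper subwords of `ω` -/
def SubSet (ω : List (Fin D.n)) : Set D.W :=
  {v | ∃ ω' : List (Fin D.n), ω'.Sublist ω ∧ ω' ≠ ω ∧ D.wordProd ω' = v}

lemma subSet_cons (i : Fin D.n) (ω : List (Fin D.n)) :
    D.SubSet ω ⊆ D.SubSet (i :: ω) := by
  rintro v ⟨ω', hsub, hne, rfl⟩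
  refine ⟨ω', hsub.cons i, ?_, rfl⟩
  intro h
  have := congrArg List.length h
  have h2 := hsub.length_le
  simp at this
  omega

lemma smul_subSet_cons (i : Fin D.n) (ω : List (Fin D.n)) :
    (fun v => D.s i * v) '' D.SubSet ω ⊆ D.SubSet (i :: ω) := by
  rintro _ ⟨v, ⟨ω', hsub, hne, rfl⟩, rfl⟩
  refine ⟨i :: ω', List.cons_sublist_cons.mpr hsub, ?_, by rw [wordProd_cons]⟩
  intro h
  exact hne (by injection h)

lemma wordProd_mem_subSet_cons (i : Fin D.n) (ω : List (Fin D.n)) :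
    D.wordProd ω ∈ D.SubSet (i :: ω) := by
  refine ⟨ω, List.sublist_cons_self i ω, ?_, rfl⟩
  intro h
  have := congrArg List.length h
  simp at this

/-- the span of the `δ_v` with `len v < l` -/
def Low (l : ℕ) : Submodule D.Q D.QW :=
  Submodule.span D.Q (D.δ '' {v | D.len v < l})

lemma subSet_subset_lt_len {w : D.W} {ω : List (Fin D.n)} (hred : D.IsReduced w ω) :
    D.SubSet ω ⊆ {v | D.len v < D.len w} := by
  rintro v ⟨ω', hsub, hne, rfl⟩
  have h1 : D.len (D.wordProd ω') ≤ ω'.length := D.len_le rfl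
  have h2 : ω'.length ≤ ω.length := hsub.length_le
  have h3 : ω'.length ≠ ω.length := fun h => hne (hsub.eq_of_length h)
  have h4 : ω.length = D.len w := hred.2
  simp only [Set.mem_setOf_eq]
  omega

/-- the general expansion lemma: a product of elements of the form
`ι(u_i) δ_{s_i} + ι(v_i)` with `u_i` units is `ι(U) δ_{wordProd ω}` plus an error
term spanned by `δ`'s at proper subword products -/
lemma Zword_expand (Z : Fin D.n → D.QW) (u vq : Fin D.n → D.Q)
    (hu : ∀ i, IsUnit (u i))
    (hZ : ∀ i, Z i = D.ι (u i) * D.δ (D.s i) + D.ι (vq i)) :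
    ∀ ω : List (Fin D.n), ∃ U : D.Q, IsUnit U ∧
      ((ω.map Z).prod - D.ι U * D.δ (D.wordProd ω)) ∈
        Submodule.span D.Q (D.δ '' D.SubSet ω) := by
  intro ω
  induction ω with
  | nil =>
      refine ⟨1, isUnit_one, ?_⟩
      simp only [List.map_nil, List.prod_nil, wordProd_nil, map_one, mul_one]
      rw [sub_self]
      exact Submodule.zero_mem _
  | cons i ω ih =>
      obtain ⟨U', hU', hr⟩ := ih
      set r := (ω.map Z).prod - D.ι U' * D.δ (D.wordProd ω) with hrdef
      have hP : (ω.map Z).prod = D.ι U' * D.δ (D.wordProd ω) + r := by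
        rw [hrdef]; abel
      have hsu : IsUnit (D.s i • U') := hU'.map (MulSemiringAction.toRingHom D.W D.Q (D.s i))
      refine ⟨u i * (D.s i • U'), (hu i).mul hsu, ?_⟩
      have hAδ : (D.ι (u i) * D.δ (D.s i)) * (D.ι U' * D.δ (D.wordProd ω))
          = D.ι (u i * (D.s i • U')) * D.δ (D.s i * D.wordProd ω) := by
        rw [map_mul, map_mul, mul_assoc, ← mul_assoc (D.δ (D.s i)), D.twist, mul_assoc,
          mul_assoc]
      have key : (((i :: ω).map Z).prod - D.ι (u i * (D.s i • U')) * D.δ (D.wordProd (i :: ω)))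
          = D.ι (u i) * (D.δ (D.s i) * r)
            + ((D.ι (vq i) * D.ι U') * D.δ (D.wordProd ω) + D.ι (vq i) * r) := by
        rw [List.map_cons, List.prod_cons, hZ i, hP, wordProd_cons, ← hAδ]
        noncomm_ring
      rw [key]
      refine Submodule.add_mem _ ?_ (Submodule.add_mem _ ?_ ?_)
      · have h2 := D.delta_mul_span (D.s i) hr
        have h3 : D.ι (u i) * (D.δ (D.s i) * r) = (u i) • (D.δ (D.s i) * r) := rfl
        rw [h3]
        refine Submodule.smul_mem _ _ ?_
        exact Submodule.span_mono (Set.image_mono (D.smul_subSet_cons i ω)) h2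
      · have h3 : (D.ι (vq i) * D.ι U') * D.δ (D.wordProd ω)
            = (vq i * U') • D.δ (D.wordProd ω) := by
          rw [q_smul_def, map_mul]
        rw [h3]
        exact Submodule.smul_mem _ _
          (Submodule.subset_span ⟨D.wordProd ω, D.wordProd_mem_subSet_cons i ω, rfl⟩)
      · have h3 : D.ι (vq i) * r = (vq i) • r := rfl
        rw [h3]
        exact Submodule.smul_mem _ _
          (Submodule.span_mono (Set.image_mono (D.subSet_cons i ω)) hr)

end DemazureSetup
end

noncomputable section
namespace DemazureSetup

variable {R : Type} [CommRing R] (D : DemazureSetup R)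

lemma delta_mem_fspan (f : D.W → D.QW)
    (hf : ∀ w, ∃ U r, IsUnit U ∧ f w = D.ι U * D.δ w + r ∧ r ∈ D.Low (D.len w)) :
    ∀ (nn : ℕ) (w : D.W), D.len w = nn → D.δ w ∈ Submodule.span D.Q (Set.range f) := by
  intro nn
  induction nn using Nat.strong_induction_on with
  | _ nn ih =>
    intro w hlen
    obtain ⟨U, r, hU, hfw, hrlow⟩ := hf w
    have hrs : r ∈ Submodule.span D.Q (Set.range f) := by
      refine Submodule.span_le.mpr ?_ hrlow
      rintro _ ⟨v, hv, rfl⟩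
      exact ih (D.len v) (by simp only [Set.mem_setOf_eq] at hv; omega) v rfl
    have hfs : f w ∈ Submodule.span D.Q (Set.range f) := Submodule.subset_span ⟨w, rfl⟩
    have h1 : (↑hU.unit⁻¹ : D.Q) * U = 1 := hU.val_inv_mul
    have hδ : D.δ w = (↑hU.unit⁻¹ : D.Q) • (f w - r) := by
      rw [hfw, add_sub_cancel_right, q_smul_def, ← mul_assoc, ← map_mul, h1, map_one, one_mul]
    rw [hδ]
    exact Submodule.smul_mem _ _ (Submodule.sub_mem _ hfs hrs)

lemma mem_fspan (f : D.W → D.QW)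
    (hf : ∀ w, ∃ U r, IsUnit U ∧ f w = D.ι U * D.δ w + r ∧ r ∈ D.Low (D.len w))
    (z : D.QW) : z ∈ Submodule.span D.Q (Set.range f) := by
  rw [D.coeff_spec z, Finsupp.sum]
  refine Submodule.sum_mem _ fun w _ => ?_
  have h3 : D.ι (D.coeff z w) * D.δ w = (D.coeff z w) • D.δ w := rfl
  rw [h3]
  exact Submodule.smul_mem _ _ (D.delta_mem_fspan f hf (D.len w) w rfl)

/-- the additive coordinate map -/
def coeffHom : D.QW →+ (D.W →₀ D.Q) := AddMonoidHom.mk' D.coeff D.coeff_add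

lemma fcoeffs_zero (f : D.W → D.QW)
    (hf : ∀ w, ∃ U r, IsUnit U ∧ f w = D.ι U * D.δ w + r ∧ r ∈ D.Low (D.len w))
    (d : D.W →₀ D.Q) (hd : (d.sum fun w q => D.ι q * f w) = 0) : d = 0 := by
  by_contra hne
  obtain ⟨w₀, hw₀, hmax⟩ := Finset.exists_max_image d.support (fun w => D.len w)
    (Finsupp.support_nonempty_iff.mpr hne)
  choose U rr hU hfw hrlow using hf
  have hterm : ∀ w ∈ d.support,
      D.coeff (D.ι (d w) * f w) w₀ = if w = w₀ then d w * U w else 0 := by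
    intro w hw
    have e1 : D.ι (d w) * f w = D.ι (d w * U w) * D.δ w + (d w) • rr w := by
      rw [hfw w, mul_add, ← mul_assoc, ← map_mul, q_smul_def]
    have hz : D.coeff (rr w) w₀ = 0 := by
      refine D.coeff_span_zero (hrlow w) w₀ ?_
      simp only [Set.mem_setOf_eq, not_lt]
      exact hmax w hw
    rw [e1, coeff_add, coeff_iota_delta, coeff_smul]
    rw [Finsupp.add_apply, Finsupp.smul_apply, hz, smul_zero, add_zero,
      Finsupp.single_apply]
  have h0 : D.coeff (d.sum fun w q => D.ι q * f w) w₀ = d w₀ * U w₀ := by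
    rw [Finsupp.sum]
    have hmap : D.coeff (∑ w ∈ d.support, D.ι (d w) * f w)
        = ∑ w ∈ d.support, D.coeff (D.ι (d w) * f w) := map_sum D.coeffHom _ _
    rw [hmap, Finset.sum_apply']
    rw [Finset.sum_congr rfl hterm]
    exact Finset.sum_ite_eq' d.support w₀ _ |>.trans (if_pos hw₀)
  rw [hd, coeff_zero] at h0
  have hz0 : d w₀ = 0 := by
    have h2 : d w₀ * U w₀ = 0 := h0.symm
    exact ((hU w₀).mul_left_eq_zero).mp h2
  exact (Finsupp.mem_support_iff.mp hw₀) hz0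

/-- the generic triangular-basis theorem -/
theorem basis_generic (f : D.W → D.QW)
    (hf : ∀ w, ∃ U r, IsUnit U ∧ f w = D.ι U * D.δ w + r ∧ r ∈ D.Low (D.len w)) :
    ∀ z : D.QW, ∃! c : D.W →₀ D.Q, z = c.sum fun w q => D.ι q * f w := by
  intro z
  have hex := D.mem_fspan f hf z
  obtain ⟨c, hc⟩ := Finsupp.mem_span_range_iff_exists_finsupp.mp hex
  have hLc : ∀ c'' : D.W →₀ D.Q, (c''.sum fun w q => D.ι q * f w)
      = Finsupp.linearCombination D.Q f c'' := by
    intro c''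
    rw [Finsupp.linearCombination_apply]
    exact Finsupp.sum_congr fun w _ => rfl
  refine ⟨c, ?_, ?_⟩
  · rw [← hc]
    exact (Finsupp.sum_congr fun w _ => rfl).symm
  · intro c' hc'
    have hdiff : ((c' - c).sum fun w q => D.ι q * f w) = 0 := by
      have e1 : (c'.sum fun w q => D.ι q * f w) = z := hc'.symm
      have e2 : (c.sum fun w q => D.ι q * f w) = z := by
        rw [← hc]
        exact Finsupp.sum_congr fun w _ => rfl
      rw [hLc, map_sub, ← hLc, ← hLc, e1, e2, sub_self]
    have := D.fcoeffs_zero f hf (c' - c) hdiff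
    exact sub_eq_zero.mp this

end DemazureSetup
end

noncomputable section
namespace DemazureSetup

variable {R : Type} [CommRing R] (D : DemazureSetup R)

lemma xQ_sroot_isUnit (i : Fin D.n) : IsUnit (D.xQ (D.sroot i)) := by
  haveI := D.loc
  have hmem : D.x (D.sroot i) ∈ Submonoid.closure
      (D.x '' {v | (∃ (w : D.W) (i' : Fin D.n), v = w • D.sroot i') ∧
        v ∈ (AddSubmonoid.closure (Set.range D.sroot) : AddSubmonoid D.Λ)}) :=
    Submonoid.subset_closure
      ⟨D.sroot i, ⟨⟨1, i, (one_smul _ _).symm⟩, AddSubmonoid.subset_closure ⟨i, rfl⟩⟩, rfl⟩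
  exact IsLocalization.map_units D.Q ⟨_, hmem⟩

lemma xQ_neg_sroot_isUnit (i : Fin D.n) : IsUnit (D.xQ (-(D.sroot i))) := by
  have h1 : D.s i • D.xQ (D.sroot i) = D.xQ (-(D.sroot i)) := by
    rw [xQ, D.smul_SQ, D.smul_x, D.s_smul_self]
    rfl
  rw [← h1]
  exact (D.xQ_sroot_isUnit i).map (MulSemiringAction.toRingHom D.W D.Q (D.s i))

lemma Xi_eq (i : Fin D.n) :
    D.Xi i = D.ι (-(Ring.inverse (D.xQ (D.sroot i)))) * D.δ (D.s i)
      + D.ι (Ring.inverse (D.xQ (D.sroot i))) := by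
  rw [Xi, Xel, D.refl_sroot, mul_sub, mul_one, map_neg, neg_mul]
  abel

lemma Yi_eq (i : Fin D.n) :
    D.Yi i = D.ι (Ring.inverse (D.xQ (D.sroot i))) * D.δ (D.s i)
      + D.ι (Ring.inverse (D.xQ (-(D.sroot i)))) := by
  rw [Yi, Yel, D.refl_sroot, add_comm]

lemma hfX (I : D.W → List (Fin D.n)) (hI : D.IsRedSystem I) (w : D.W) :
    ∃ U r, IsUnit U ∧ D.Xword (I w) = D.ι U * D.δ w + r ∧ r ∈ D.Low (D.len w) := by
  obtain ⟨U, hU, hspan⟩ := D.Zword_expand D.Xi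
    (fun i => -(Ring.inverse (D.xQ (D.sroot i))))
    (fun i => Ring.inverse (D.xQ (D.sroot i)))
    (fun i => (isUnit_ringInverse.mpr (D.xQ_sroot_isUnit i)).neg)
    (fun i => D.Xi_eq i) (I w)
  rw [(hI w).1] at hspan
  refine ⟨U, D.Xword (I w) - D.ι U * D.δ w, hU, by abel, ?_⟩
  have : D.Xword (I w) - D.ι U * D.δ w
      = ((I w).map D.Xi).prod - D.ι U * D.δ w := rfl
  rw [this]
  exact Submodule.span_mono (Set.image_mono (D.subSet_subset_lt_len (hI w))) hspan

lemma hfY (I : D.W → List (Fin D.n)) (hI : D.IsRedSystem I) (w : D.W) :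
    ∃ U r, IsUnit U ∧ D.Yword (I w) = D.ι U * D.δ w + r ∧ r ∈ D.Low (D.len w) := by
  obtain ⟨U, hU, hspan⟩ := D.Zword_expand D.Yi
    (fun i => Ring.inverse (D.xQ (D.sroot i)))
    (fun i => Ring.inverse (D.xQ (-(D.sroot i))))
    (fun i => isUnit_ringInverse.mpr (D.xQ_sroot_isUnit i))
    (fun i => D.Yi_eq i) (I w)
  rw [(hI w).1] at hspan
  refine ⟨U, D.Yword (I w) - D.ι U * D.δ w, hU, by abel, ?_⟩
  have : D.Yword (I w) - D.ι U * D.δ w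
      = ((I w).map D.Yi).prod - D.ι U * D.δ w := rfl
  rw [this]
  exact Submodule.span_mono (Set.image_mono (D.subSet_subset_lt_len (hI w))) hspan

end DemazureSetup
end
/-- **Corollary 2.6**:  for any choice of reduced words `I_w`, both `{X_{I_w}}_{w ∈ W}`
and `{Y_{I_w}}_{w ∈ W}` are bases of `Q_W` as a left `Q`-module:  every element of
`Q_W` is a unique finite `Q`-linear combination of the `X_{I_w}` (resp. the `Y_{I_w}`). -/
theorem Xword_Yword_bases_of_QW
    {R : Type} [CommRing R] (D : DemazureSetup R)
    (I : D.W → List (Fin D.n)) (hI : D.IsRedSystem I) :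
    (∀ z : D.QW, ∃! c : D.W →₀ D.Q, z = c.sum fun w q => D.ι q * D.Xword (I w)) ∧
    (∀ z : D.QW, ∃! c : D.W →₀ D.Q, z = c.sum fun w q => D.ι q * D.Yword (I w)) :=
  ⟨D.basis_generic (fun w => D.Xword (I w)) (D.hfX I hI),
   D.basis_generic (fun w => D.Yword (I w)) (D.hfY I hI)⟩
end
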